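/- Let A = [[αI_{n−k}, C],[D, βI_k]] with k ≤ n/2, and set M(θ) = C*C + DD* − 2Re(e^{−2iθ}DC), where Re X = (X + X*)/2. Then the characteristic polynomial of Im(e^{−iθ}A) equals (Im(e^{−iθ}α) − λ)^{n−2k} · det( (λ² − λ·Im(e^{−iθ}(α+β)) + Im(e^{−iθ}α)Im(e^{−iθ}β))I_k − M(θ)/4 ). -/

import Mathlib

set_option maxHeartbeats 1000000

open Matrix

/-- The "imaginary part" of a square complex matrix: `Im X = (X - X*)/(2i)`. -/
noncomputable def imPart {ι : Type*} [Fintype ι] [DecidableEq ι] (X : Matrix ι ι ℂ) : Matrix ι ι ℂ :=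
  (2 * Complex.I)⁻¹ • (X - Xᴴ)

/-- The "real part" of a square complex matrix: `Re X = (X + X*)/2`. -/
noncomputable def rePart {ι : Type*} [Fintype ι] [DecidableEq ι] (X : Matrix ι ι ℂ) : Matrix ι ι ℂ :=
  (2 : ℂ)⁻¹ • (X + Xᴴ)

lemma aux_him (w : ℂ) : (2*Complex.I)⁻¹ * (w - star w) = (w.im : ℂ) := by
  rw [Complex.star_def, Complex.sub_conj]
  push_cast
  field_simp

lemma aux_diag {ι : Type*} [Fintype ι] [DecidableEq ι] (z w lam : ℂ) :
    (2*Complex.I)⁻¹ • (z • (w • (1 : Matrix ι ι ℂ)) - star z • (star w • (1 : Matrix ι ι ℂ)))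
      - lam • (1 : Matrix ι ι ℂ) = (((z*w).im : ℂ) - lam) • 1 := by
  rw [smul_smul, smul_smul, ← sub_smul, smul_smul, ← sub_smul]
  congr 1
  rw [← star_mul', aux_him]

lemma aux_det {m k : ℕ} (hk : k ≤ m) (d : ℂ) (P : Matrix (Fin m) (Fin k) ℂ)
    (Q : Matrix (Fin k) (Fin m) ℂ) (c : ℂ) :
    (Matrix.fromBlocks (c • (1 : Matrix (Fin m) (Fin m) ℂ)) P Q
        (d • (1 : Matrix (Fin k) (Fin k) ℂ))).det
      = c ^ (m - k) * ((c * d) • (1 : Matrix (Fin k) (Fin k) ℂ) - Q * P).det := by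
  have key : ∀ c : ℂ, c ≠ 0 →
      (Matrix.fromBlocks (c • (1 : Matrix (Fin m) (Fin m) ℂ)) P Q
        (d • (1 : Matrix (Fin k) (Fin k) ℂ))).det
      = c ^ (m - k) * ((c * d) • (1 : Matrix (Fin k) (Fin k) ℂ) - Q * P).det := by
    intro c hc
    haveI : Invertible (c • (1 : Matrix (Fin m) (Fin m) ℂ)) := by
      apply Matrix.invertibleOfIsUnitDet
      simp [Matrix.det_smul, isUnit_iff_ne_zero, hc]
    rw [Matrix.det_fromBlocks₁₁]
    have hinv : ⅟(c • (1 : Matrix (Fin m) (Fin m) ℂ)) = c⁻¹ • 1 := by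
      apply invOf_eq_right_inv
      rw [Matrix.smul_mul, Matrix.mul_smul, smul_smul, Matrix.one_mul,
        mul_inv_cancel₀ hc, one_smul]
    rw [hinv, Matrix.det_smul, Matrix.det_one, mul_one]
    have h1 : Q * (c⁻¹ • (1 : Matrix (Fin m) (Fin m) ℂ)) * P = c⁻¹ • (Q * P) := by
      rw [Matrix.mul_smul, Matrix.mul_one, Matrix.smul_mul]
    rw [h1]
    have h2 : (c * d) • (1 : Matrix (Fin k) (Fin k) ℂ) - Q * P
        = c • (d • (1 : Matrix (Fin k) (Fin k) ℂ) - c⁻¹ • (Q * P)) := by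
      rw [smul_sub, smul_smul, smul_smul, mul_inv_cancel₀ hc, one_smul]
    rw [h2, Matrix.det_smul, ← mul_assoc, ← pow_add]
    simp only [Fintype.card_fin, Nat.sub_add_cancel hk]
  have hf : Continuous fun c : ℂ =>
      (Matrix.fromBlocks (c • (1 : Matrix (Fin m) (Fin m) ℂ)) P Q
        (d • (1 : Matrix (Fin k) (Fin k) ℂ))).det := by
    have hrep : ∀ c : ℂ,
        Matrix.fromBlocks (c • (1 : Matrix (Fin m) (Fin m) ℂ)) P Q
          (d • (1 : Matrix (Fin k) (Fin k) ℂ))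
        = c • Matrix.fromBlocks (1 : Matrix (Fin m) (Fin m) ℂ) 0 0 0
            + Matrix.fromBlocks 0 P Q (d • (1 : Matrix (Fin k) (Fin k) ℂ)) := by
      intro c
      rw [Matrix.fromBlocks_smul]
      simp only [smul_zero]
      rw [Matrix.fromBlocks_add]
      simp
    simp only [hrep]
    exact ((continuous_id.smul continuous_const).add continuous_const).matrix_det
  have hg : Continuous fun c : ℂ =>
      c ^ (m - k) * ((c * d) • (1 : Matrix (Fin k) (Fin k) ℂ) - Q * P).det := by
    exact (continuous_pow _).mul
      ((((continuous_id.mul continuous_const).smul continuous_const).sub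
        continuous_const).matrix_det)
  have := Continuous.ext_on (dense_compl_singleton (0 : ℂ)) hf hg
    (fun c hc => key c hc)
  exact congrFun this c

theorem charpoly_of_scalar_diagonal_blocks
    {m k : ℕ} (hk : k ≤ m) (α β : ℂ)
    (C : Matrix (Fin m) (Fin k) ℂ) (D : Matrix (Fin k) (Fin m) ℂ)
    (A : Matrix (Fin m ⊕ Fin k) (Fin m ⊕ Fin k) ℂ)
    (hA : A = Matrix.fromBlocks (α • 1) C D (β • 1))
    (M : ℝ → Matrix (Fin k) (Fin k) ℂ)
    (hM : ∀ θ : ℝ, M θ = Cᴴ * C + D * Dᴴ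
      - (2 : ℂ) • rePart (Complex.exp (-(2 * θ : ℂ) * Complex.I) • (D * C)))
    (θ : ℝ) (lam : ℂ) :
    Matrix.det (imPart (Complex.exp (-(θ : ℂ) * Complex.I) • A) - lam • 1) =
      (((Complex.exp (-(θ : ℂ) * Complex.I) * α).im : ℂ) - lam) ^ (m - k) *
        Matrix.det
          ((lam ^ 2 - lam * ((Complex.exp (-(θ : ℂ) * Complex.I) * (α + β)).im : ℂ)
              + ((Complex.exp (-(θ : ℂ) * Complex.I) * α).im : ℂ)
                * ((Complex.exp (-(θ : ℂ) * Complex.I) * β).im : ℂ))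
            • (1 : Matrix (Fin k) (Fin k) ℂ) - (4 : ℂ)⁻¹ • M θ) := by
  set z : ℂ := Complex.exp (-(θ : ℂ) * Complex.I) with hzdef
  set P : Matrix (Fin m) (Fin k) ℂ := (2*Complex.I)⁻¹ • (z • C - star z • Dᴴ) with hP
  set Q : Matrix (Fin k) (Fin m) ℂ := (2*Complex.I)⁻¹ • (z • D - star z • Cᴴ) with hQ
  have hzz : z * star z = 1 := by
    rw [Complex.star_def, hzdef, ← Complex.exp_conj, ← Complex.exp_add]
    have h0 : -(θ:ℂ) * Complex.I + (starRingEnd ℂ) (-(θ:ℂ) * Complex.I) = 0 := by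
      simp [Complex.conj_I]
    rw [h0, Complex.exp_zero]
  have hz2 : z * z = Complex.exp (-(2 * θ : ℂ) * Complex.I) := by
    rw [hzdef, ← Complex.exp_add]
    congr 1
    ring
  have hblock : imPart (z • A) - lam • 1
      = Matrix.fromBlocks ((((z*α).im : ℂ) - lam) • 1) P Q ((((z*β).im : ℂ) - lam) • 1) := by
    rw [hA, imPart, Matrix.conjTranspose_smul, Matrix.fromBlocks_conjTranspose,
      Matrix.conjTranspose_smul, Matrix.conjTranspose_smul, Matrix.conjTranspose_one,
      Matrix.fromBlocks_smul, Matrix.fromBlocks_smul,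
      show (1 : Matrix (Fin m ⊕ Fin k) (Fin m ⊕ Fin k) ℂ) = Matrix.fromBlocks 1 0 0 1 from
        Matrix.fromBlocks_one.symm,
      Matrix.fromBlocks_smul]
    simp only [sub_eq_add_neg, Matrix.fromBlocks_neg, Matrix.fromBlocks_add,
      Matrix.fromBlocks_smul]
    rw [Matrix.fromBlocks_inj]
    refine ⟨?_, ?_, ?_, ?_⟩
    · simp only [← sub_eq_add_neg]; exact aux_diag z α lam
    · simp only [smul_zero, neg_zero, add_zero, ← sub_eq_add_neg]; rfl
    · simp only [smul_zero, neg_zero, add_zero, ← sub_eq_add_neg]; rfl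
    · simp only [← sub_eq_add_neg, Matrix.conjTranspose_one]; exact aux_diag z β lam
  have h4 : ((2*Complex.I)⁻¹ * (2*Complex.I)⁻¹ : ℂ) = -(4:ℂ)⁻¹ := by
    rw [← mul_inv, mul_mul_mul_comm, Complex.I_mul_I]
    norm_num
  have hQP : Q * P = (4:ℂ)⁻¹ • M θ := by
    rw [hP, hQ, Matrix.smul_mul, Matrix.mul_smul, smul_smul, h4]
    have hzz' : star z * z = 1 := by rw [mul_comm]; exact hzz
    have hexp : (z • D - star z • Cᴴ) * (z • C - star z • Dᴴ)
        = (z*z) • (D*C) - (D*Dᴴ) - ((Cᴴ*C) - (star z * star z) • (Cᴴ*Dᴴ)) := by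
      rw [Matrix.sub_mul, Matrix.mul_sub, Matrix.mul_sub]
      simp only [Matrix.smul_mul, Matrix.mul_smul, smul_smul]
      rw [hzz, hzz', one_smul, one_smul]
    rw [hexp, hM θ, rePart, Matrix.conjTranspose_smul, Matrix.conjTranspose_mul]
    rw [← hz2]
    have hsw : star (z * z) = star z * star z := star_mul' z z
    rw [hsw]
    module
  rw [hblock, aux_det hk]
  congr 1
  have himab : ((z*(α+β)).im : ℂ) = ((z*α).im : ℂ) + ((z*β).im : ℂ) := by
    rw [mul_add, Complex.add_im]
    push_cast
    ring
  rw [hQP, himab]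
  congr 3
  ring
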